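/- Let α, β, γ ∈ ℝ satisfy α > -1, β > -1, γ > -1 and α + β + γ > -2. Then ∫_{[0,1]²} x^α · y^β · |x-y|^γ dx dy = ( B(β+1, γ+1) + B(α+1, γ+1) ) / (α + β + γ + 2). -/

import Mathlib

open MeasureTheory Set

/-- The Euler Beta function `B(a,b) = Γ(a)Γ(b)/Γ(a+b)`. -/
noncomputable def eulerBeta (a b : ℝ) : ℝ := Real.Gamma a * Real.Gamma b / Real.Gamma (a + b)

lemma rbeta_intInt {b c : ℝ} (hb : -1 < b) (hc : -1 < c) {x : ℝ} (hx : 0 < x) :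
    IntervalIntegrable (fun y : ℝ => y ^ b * (x - y) ^ c) volume 0 x := by
  have h1 : IntervalIntegrable
      (fun t : ℝ => (t : ℂ) ^ ((b + 1 : ℂ) - 1) * (1 - (t : ℂ)) ^ ((c + 1 : ℂ) - 1))
      volume 0 1 :=
    Complex.betaIntegral_convergent (by simp; linarith) (by simp; linarith)
  have h2 := h1.comp_mul_left (c := x⁻¹)
  rw [zero_div, one_div, inv_inv] at h2
  have h3 := ((h2.const_mul ((x : ℂ) ^ (b + c : ℂ))).norm)
  rw [intervalIntegrable_iff, uIoc_of_le hx.le] at h3 ⊢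
  refine h3.congr_fun ?_ measurableSet_Ioc
  intro y hy
  have hy0 : 0 ≤ y := hy.1.le
  have hxy : 0 ≤ x - y := by linarith [hy.2]
  have h4 : 0 ≤ x⁻¹ * y := by positivity
  have h5 : 0 ≤ 1 - x⁻¹ * y := by
    have : x⁻¹ * y ≤ x⁻¹ * x := by
      apply mul_le_mul_of_nonneg_left hy.2 (by positivity)
    rw [inv_mul_cancel₀ hx.ne'] at this; linarith
  simp only [add_sub_cancel_right]
  rw [show ((x⁻¹ * y : ℝ) : ℂ) ^ (b : ℂ) = ((x⁻¹ * y) ^ b : ℝ) from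
        (Complex.ofReal_cpow h4 b).symm,
      show (1 - ((x⁻¹ * y : ℝ) : ℂ)) ^ (c : ℂ) = ((1 - x⁻¹ * y) ^ c : ℝ) from by
        rw [show (1 - ((x⁻¹ * y : ℝ) : ℂ)) = ((1 - x⁻¹ * y : ℝ) : ℂ) by push_cast; ring]
        exact (Complex.ofReal_cpow h5 c).symm,
      show ((x : ℂ)) ^ ((b : ℂ) + (c : ℂ)) = ((x ^ (b + c) : ℝ) : ℂ) from by
        rw [← Complex.ofReal_add, ← Complex.ofReal_cpow hx.le]]
  rw [← Complex.ofReal_mul, ← Complex.ofReal_mul, Complex.norm_real]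
  rw [Real.norm_of_nonneg (by positivity)]
  have e1 : x ^ b * (x⁻¹ * y) ^ b = y ^ b := by
    rw [← Real.mul_rpow hx.le h4, mul_inv_cancel_left₀ hx.ne']
  have e2 : x ^ c * (1 - x⁻¹ * y) ^ c = (x - y) ^ c := by
    rw [← Real.mul_rpow hx.le h5, mul_sub, mul_one, mul_inv_cancel_left₀ hx.ne']
  rw [Real.rpow_add hx, ← e1, ← e2]; ring

lemma rbeta_val {b c : ℝ} (hb : -1 < b) (hc : -1 < c) {x : ℝ} (hx : 0 < x) :
    ∫ y in (0:ℝ)..x, y ^ b * (x - y) ^ c = x ^ (b + c + 1) * eulerBeta (b + 1) (c + 1) := by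
  have key := Complex.betaIntegral_scaled (b + 1) (c + 1) hx
  have hbeta : Complex.betaIntegral ((b : ℂ) + 1) ((c : ℂ) + 1)
      = ((eulerBeta (b + 1) (c + 1) : ℝ) : ℂ) := by
    have hne : Complex.Gamma ((b : ℂ) + 1 + ((c : ℂ) + 1)) ≠ 0 := by
      rw [show ((b : ℂ) + 1 + ((c : ℂ) + 1)) = ((b + c + 2 : ℝ) : ℂ) by push_cast; ring,
        Complex.Gamma_ofReal]
      exact_mod_cast (Real.Gamma_pos_of_pos (by linarith)).ne'
    have h := Complex.Gamma_mul_Gamma_eq_betaIntegral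
      (s := (b : ℂ) + 1) (t := (c : ℂ) + 1) (by simp; linarith) (by simp; linarith)
    have h2 : Complex.betaIntegral ((b : ℂ) + 1) ((c : ℂ) + 1)
        = Complex.Gamma ((b:ℂ)+1) * Complex.Gamma ((c:ℂ)+1)
          / Complex.Gamma ((b:ℂ)+1+((c:ℂ)+1)) := by
      rw [h, mul_comm, mul_div_assoc, div_self hne, mul_one]
    rw [h2, show ((b : ℂ) + 1) = ((b + 1 : ℝ) : ℂ) by push_cast; ring,
      show ((c : ℂ) + 1) = ((c + 1 : ℝ) : ℂ) by push_cast; ring,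
      show ((b + 1 : ℝ) : ℂ) + ((c + 1 : ℝ) : ℂ) = ((b + 1 + (c + 1) : ℝ) : ℂ) by push_cast; ring,
      Complex.Gamma_ofReal, Complex.Gamma_ofReal, Complex.Gamma_ofReal,
      ← Complex.ofReal_mul, ← Complex.ofReal_div]
    rfl
  have h0 : ((∫ y in (0:ℝ)..x, y ^ b * (x - y) ^ c : ℝ) : ℂ)
      = ∫ y in (0:ℝ)..x, (y : ℂ) ^ ((b : ℂ) + 1 - 1) * ((x : ℂ) - y) ^ ((c : ℂ) + 1 - 1) := by
    rw [← intervalIntegral.integral_ofReal]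
    refine intervalIntegral.integral_congr fun y hy => ?_
    rw [uIcc_of_le hx.le] at hy
    have hy1 : (0:ℝ) ≤ y := hy.1
    have hy2 : (0:ℝ) ≤ x - y := sub_nonneg.mpr hy.2
    simp only [add_sub_cancel_right, Complex.ofReal_mul, Complex.ofReal_cpow hy1,
      Complex.ofReal_cpow hy2, Complex.ofReal_sub]
  have h1 : (x : ℂ) ^ ((b : ℂ) + 1 + ((c : ℂ) + 1) - 1) = ((x ^ (b + c + 1) : ℝ) : ℂ) := by
    rw [show ((b : ℂ) + 1 + ((c : ℂ) + 1) - 1) = (((b + c + 1 : ℝ)) : ℂ) by push_cast; ring,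
      ← Complex.ofReal_cpow hx.le]
  apply Complex.ofReal_injective
  rw [h0, key, hbeta, h1, ← Complex.ofReal_mul]

noncomputable def triF (a b c : ℝ) : ℝ × ℝ → ℝ :=
  fun p => if p.2 ≤ p.1 then p.1 ^ a * p.2 ^ b * |p.1 - p.2| ^ c else 0

lemma triF_meas (a b c : ℝ) : Measurable (triF a b c) := by
  apply Measurable.ite (measurableSet_le measurable_snd measurable_fst)
  · fun_prop
  · exact measurable_const

lemma triF_slice_int {a b c : ℝ} (hb : -1 < b) (hc : -1 < c) {x : ℝ}
    (hx : x ∈ Ioc (0:ℝ) 1) :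
    IntegrableOn (fun y => triF a b c (x, y)) (Icc (0:ℝ) 1) volume := by
  have base := rbeta_intInt hb hc hx.1
  rw [intervalIntegrable_iff, uIoc_of_le hx.1.le] at base
  have base2 : IntegrableOn (fun y => x ^ a * y ^ b * |x - y| ^ c) (Ioc 0 x) volume := by
    refine IntegrableOn.congr_fun (Integrable.const_mul base (x ^ a)) ?_ measurableSet_Ioc
    intro y hy
    simp only [abs_of_nonneg (sub_nonneg.mpr hy.2)]
    ring
  have base3 : IntegrableOn (fun y => x ^ a * y ^ b * |x - y| ^ c) (Icc 0 x) volume :=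
    (integrableOn_Icc_iff_integrableOn_Ioc).mpr base2
  have heq : (fun y => triF a b c (x, y))
      = Set.indicator (Iic x) (fun y => x ^ a * y ^ b * |x - y| ^ c) := by
    ext y
    simp only [triF, Set.indicator, mem_Iic]
  rw [heq, IntegrableOn, integrable_indicator_iff measurableSet_Iic, IntegrableOn,
    Measure.restrict_restrict measurableSet_Iic]
  have hset : Iic x ∩ Icc (0:ℝ) 1 = Icc 0 x := by
    ext y
    simp only [mem_inter_iff, mem_Iic, mem_Icc]
    constructor
    · rintro ⟨h1, h2, _⟩; exact ⟨h2, h1⟩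
    · rintro ⟨h1, h2⟩; exact ⟨h2, h1, h2.trans hx.2⟩
  rw [hset]
  exact base3

lemma triF_slice_val {a b c : ℝ} (hb : -1 < b) (hc : -1 < c) {x : ℝ}
    (hx : x ∈ Ioc (0:ℝ) 1) :
    ∫ y in Icc (0:ℝ) 1, triF a b c (x, y)
      = x ^ (a + b + c + 1) * eulerBeta (b + 1) (c + 1) := by
  have heq : (fun y => triF a b c (x, y))
      = Set.indicator (Iic x) (fun y => x ^ a * y ^ b * |x - y| ^ c) := by
    ext y
    simp only [triF, Set.indicator, mem_Iic]
  have hset : Icc (0:ℝ) 1 ∩ Iic x = Icc 0 x := by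
    ext y
    simp only [mem_inter_iff, mem_Iic, mem_Icc]
    constructor
    · rintro ⟨⟨h2, _⟩, h1⟩; exact ⟨h2, h1⟩
    · rintro ⟨h1, h2⟩; exact ⟨⟨h1, h2.trans hx.2⟩, h2⟩
  rw [heq, setIntegral_indicator measurableSet_Iic, hset,
    integral_Icc_eq_integral_Ioc, ← intervalIntegral.integral_of_le hx.1.le]
  have hcongr : ∀ y ∈ uIcc (0:ℝ) x,
      x ^ a * y ^ b * |x - y| ^ c = x ^ a * (y ^ b * (x - y) ^ c) := by
    intro y hy
    rw [uIcc_of_le hx.1.le] at hy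
    rw [abs_of_nonneg (sub_nonneg.mpr hy.2)]
    ring
  rw [intervalIntegral.integral_congr hcongr, intervalIntegral.integral_const_mul,
    rbeta_val hb hc hx.1, ← mul_assoc, ← Real.rpow_add hx.1]
  ring_nf

lemma triF_nonneg {a b c x y : ℝ} (hx : 0 ≤ x) (hy : 0 ≤ y) : 0 ≤ triF a b c (x, y) := by
  unfold triF
  dsimp only
  split
  · exact mul_nonneg (mul_nonneg (Real.rpow_nonneg hx _) (Real.rpow_nonneg hy _))
      (Real.rpow_nonneg (abs_nonneg _) _)
  · exact le_refl 0

lemma ae_Ioc : ∀ᵐ x ∂(volume.restrict (Icc (0:ℝ) 1)), x ∈ Ioc (0:ℝ) 1 := by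
  have h0 : ∀ᵐ (x : ℝ) ∂volume, x ≠ 0 := by
    rw [ae_iff]
    have : {x : ℝ | ¬x ≠ 0} = {0} := by ext x; simp
    rw [this, measure_singleton]
  filter_upwards [ae_restrict_mem measurableSet_Icc, ae_restrict_of_ae h0] with x hx hne
  exact ⟨lt_of_le_of_ne hx.1 (Ne.symm hne), hx.2⟩

lemma tri_key (a b c : ℝ) (ha : -1 < a) (hb : -1 < b) (hc : -1 < c) (hs : -2 < a + b + c) :
    Integrable (triF a b c)
        ((volume.restrict (Icc (0:ℝ) 1)).prod (volume.restrict (Icc (0:ℝ) 1))) ∧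
      ∫ p, triF a b c p ∂((volume.restrict (Icc (0:ℝ) 1)).prod (volume.restrict (Icc (0:ℝ) 1)))
        = eulerBeta (b + 1) (c + 1) / (a + b + c + 2) := by
  set μI := volume.restrict (Icc (0:ℝ) 1) with hμI
  set B := eulerBeta (b + 1) (c + 1) with hB
  have hmeas : AEStronglyMeasurable (triF a b c) (μI.prod μI) :=
    (triF_meas a b c).aestronglyMeasurable
  have hout : IntegrableOn (fun x : ℝ => x ^ (a + b + c + 1) * B) (Icc 0 1) volume := by
    have h1 : IntervalIntegrable (fun x : ℝ => x ^ (a + b + c + 1)) volume 0 1 :=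
      intervalIntegral.intervalIntegrable_rpow' (by linarith)
    rw [intervalIntegrable_iff, uIoc_of_le zero_le_one] at h1
    exact (integrableOn_Icc_iff_integrableOn_Ioc).mpr (h1.mul_const B)
  have hint : Integrable (triF a b c) (μI.prod μI) := by
    rw [integrable_prod_iff hmeas]
    constructor
    · filter_upwards [ae_Ioc] with x hx
      exact triF_slice_int (a := a) hb hc hx
    · have hcong : ∀ᵐ x ∂μI, x ^ (a + b + c + 1) * B = ∫ y, ‖triF a b c (x, y)‖ ∂μI := by
        filter_upwards [ae_Ioc] with x hx
        have : (∫ y, ‖triF a b c (x, y)‖ ∂μI) = ∫ y in Icc (0:ℝ) 1, triF a b c (x, y) :=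
          setIntegral_congr_fun measurableSet_Icc fun y hy =>
            Real.norm_of_nonneg (triF_nonneg hx.1.le hy.1)
        rw [this, triF_slice_val hb hc hx]
      exact (hout.congr hcong)
  refine ⟨hint, ?_⟩
  rw [integral_prod _ hint]
  have h2 : ∫ x, (∫ y, triF a b c (x, y) ∂μI) ∂μI = ∫ x, x ^ (a + b + c + 1) * B ∂μI :=
    integral_congr_ae (by filter_upwards [ae_Ioc] with x hx; exact triF_slice_val hb hc hx)
  rw [h2, hμI, integral_Icc_eq_integral_Ioc, ← intervalIntegral.integral_of_le zero_le_one,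
    intervalIntegral.integral_mul_const, integral_rpow (Or.inl (by linarith))]
  rw [Real.one_rpow, Real.zero_rpow (by linarith)]
  rw [show a + b + c + 1 + 1 = a + b + c + 2 by ring]
  rw [sub_zero, div_mul_eq_mul_div, one_mul]

/-- For `α, β, γ > -1` with `α + β + γ > -2`,
`∫_{[0,1]²} x^α y^β |x-y|^γ dx dy = (B(β+1, γ+1) + B(α+1, γ+1)) / (α+β+γ+2)`. -/
theorem stmt18 (α β γ : ℝ) (hα : -1 < α) (hβ : -1 < β) (hγ : -1 < γ)
    (hsum : -2 < α + β + γ) :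
    (∫ p in (Icc (0 : ℝ) 1) ×ˢ (Icc (0 : ℝ) 1),
        p.1 ^ α * p.2 ^ β * |p.1 - p.2| ^ γ)
      = (eulerBeta (β + 1) (γ + 1) + eulerBeta (α + 1) (γ + 1)) / (α + β + γ + 2) := by
  have hprod : (volume : Measure (ℝ × ℝ)).restrict ((Icc (0:ℝ) 1) ×ˢ (Icc (0:ℝ) 1))
      = (volume.restrict (Icc (0:ℝ) 1)).prod (volume.restrict (Icc (0:ℝ) 1)) := by
    rw [Measure.volume_eq_prod, ← Measure.prod_restrict]
  set μI := volume.restrict (Icc (0:ℝ) 1) with hμI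
  have h1 := tri_key α β γ hα hβ hγ hsum
  have h2 := tri_key β α γ hβ hα hγ (by linarith)
  have h2int : Integrable (fun p : ℝ × ℝ => triF β α γ p.swap) (μI.prod μI) :=
    h2.1.swap
  have h2val : ∫ p, triF β α γ p.swap ∂(μI.prod μI) = ∫ p, triF β α γ p ∂(μI.prod μI) :=
    integral_prod_swap (triF β α γ)
  have hdiag : (μI.prod μI) {p : ℝ × ℝ | p.1 = p.2} = 0 := by
    have hD : MeasurableSet {p : ℝ × ℝ | p.1 = p.2} :=
      measurableSet_eq_fun measurable_fst measurable_snd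
    rw [Measure.prod_apply hD]
    have hz : ∀ x : ℝ, μI (Prod.mk x ⁻¹' {p : ℝ × ℝ | p.1 = p.2}) = 0 := by
      intro x
      have hpre : (Prod.mk x ⁻¹' {p : ℝ × ℝ | p.1 = p.2}) = {x} := by
        ext y; simp [eq_comm]
      rw [hpre]
      refine le_antisymm (le_trans (Measure.le_iff'.1 Measure.restrict_le_self {x}) ?_)
        (zero_le)
      rw [measure_singleton]
    simp [hz]
  have hae : (fun p : ℝ × ℝ => p.1 ^ α * p.2 ^ β * |p.1 - p.2| ^ γ)
      =ᵐ[μI.prod μI] (fun p => triF α β γ p + triF β α γ p.swap) := by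
    have hne : ∀ᵐ p ∂(μI.prod μI), p.1 ≠ p.2 := by
      rw [ae_iff]
      have : {p : ℝ × ℝ | ¬p.1 ≠ p.2} = {p : ℝ × ℝ | p.1 = p.2} := by
        ext p; simp
      rw [this, hdiag]
    filter_upwards [hne] with p hp
    rcases lt_or_gt_of_ne hp with h | h
    · simp only [triF, Prod.fst_swap, Prod.snd_swap, if_neg (not_le.mpr h), if_pos h.le]
      rw [abs_sub_comm]
      ring
    · simp only [triF, Prod.fst_swap, Prod.snd_swap, if_pos h.le, if_neg (not_le.mpr h)]
      ring
  rw [hprod, integral_congr_ae hae, integral_add h1.1 h2int, h1.2, h2val, h2.2,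
    show β + α + γ + 2 = α + β + γ + 2 by ring, ← add_div]
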